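/- Let (N₁,N₂,N₃) be a commuting triple of bounded linear operators on a complex Hilbert space H. Then the following are equivalent: (i) N₂ and N₃ are normal, N₃ is unitary, N₂ = N₂*N₃, ‖N₂‖ ≤ 2, and N₁*N₁ = I − ¼N₂*N₂ and N₁N₁* = I − ¼N₂N₂*; (ii) there exists a unitary operator U on H ⊕ H given by a 2×2 block matrix U = [U_{ij}] whose entries U₁₁, U₁₂, U₂₁, U₂₂ are commuting normal operators on H with U₁₁ = U₂₂, such that N₁ = U₂₁, N₂ = U₁₁ + U₂₂ and N₃ = U₁₁U₂₂ − U₁₂U₂₁. -/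

import Mathlib

open ContinuousLinearMap

section Fuglede

open NormedSpace Bornology

variable {A : Type*} [NormedRing A] [StarRing A] [CStarRing A] [NormedAlgebra ℂ A]
  [CompleteSpace A] [StarModule ℂ A]

/-- **Fuglede's theorem** in a unital C*-algebra. -/
theorem fuglede_aux {N T : A} (hN : N * star N = star N * N) (hT : T * N = N * T) :
    T * star N = star N * T := by
  let +nondep : NormedAlgebra ℚ A := .restrictScalars ℚ ℂ A
  have hg : Differentiable ℂ (fun z : ℂ => exp (z • star N)) :=
    fun z => (hasDerivAt_exp_smul_const (star N) z).differentiableAt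
  have hgn : Differentiable ℂ (fun z : ℂ => exp ((-z) • star N)) := hg.comp differentiable_neg
  set f : ℂ → A := fun z => exp (z • star N) * T * exp ((-z) • star N) with hf
  have hdiff : Differentiable ℂ f := (hg.mul (differentiable_const T)).mul hgn
  -- commutation facts
  have hTN : Commute T N := hT
  have hNN : Commute (star N) N := hN.symm
  have hcomm : ∀ z : ℂ, Commute T (exp (z • N)) :=
    fun z => (hTN.smul_right z).exp_right
  have hNs : ∀ (z w : ℂ), Commute (z • star N) (w • N) :=
    fun z w => (hNN.smul_right w).smul_left z
  have hexpadd : ∀ (z w : ℂ), exp (z • star N + w • N) = exp (z • star N) * exp (w • N) :=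
    fun z w => exp_add_of_commute (hNs z w)
  have hinv : ∀ (x : A), exp (-x) * exp x = 1 := by
    intro x
    rw [← exp_add_of_commute (Commute.refl x).neg_left, neg_add_cancel, exp_zero]
  have hinv' : ∀ (x : A), exp x * exp (-x) = 1 := by
    intro x
    rw [← exp_add_of_commute (Commute.refl x).neg_right, add_neg_cancel, exp_zero]
  -- f z is a conjugation of T by a unitary, hence bounded
  have hskew : ∀ z : ℂ, z • star N - (starRingEnd ℂ z) • N ∈ skewAdjoint A := by
    intro z
    rw [skewAdjoint.mem_iff]
    simp [star_smul, star_star, Complex.star_def, neg_sub]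
  have hfval : ∀ z : ℂ, f z =
      exp (z • star N - (starRingEnd ℂ z) • N) * T
        * exp (-(z • star N - (starRingEnd ℂ z) • N)) := by
    intro z
    have e1 : exp (z • star N - (starRingEnd ℂ z) • N)
        = exp (z • star N) * exp ((-(starRingEnd ℂ z)) • N) := by
      rw [← hexpadd, neg_smul, sub_eq_add_neg]
    have e2 : exp (-(z • star N - (starRingEnd ℂ z) • N))
        = exp ((starRingEnd ℂ z) • N) * exp ((-z) • star N) := by
      have hm : -(z • star N - (starRingEnd ℂ z) • N)
          = (starRingEnd ℂ z) • N + (-z) • star N := by module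
      rw [hm, exp_add_of_commute (hNs (-z) (starRingEnd ℂ z)).symm]
    rw [e1, e2, hf]
    simp only [mul_assoc]
    congr 1
    have hcancel : exp ((-(starRingEnd ℂ z)) • N) * exp ((starRingEnd ℂ z) • N) = 1 := by
      rw [neg_smul]; exact hinv _
    simp only [← mul_assoc]
    rw [(hcomm (-(starRingEnd ℂ z))).symm.eq, mul_assoc T, hcancel, mul_one]
  have hbdd : IsBounded (Set.range f) := by
    rw [Metric.isBounded_iff_subset_closedBall 0]
    refine ⟨‖T‖, ?_⟩
    rintro - ⟨z, rfl⟩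
    rw [Metric.mem_closedBall, dist_zero_right, hfval z]
    set u : A := exp (z • star N - (starRingEnd ℂ z) • N) with hu
    have hU : u ∈ unitary A := exp_mem_unitary_of_mem_skewAdjoint (hskew z)
    have hU' : exp (-(z • star N - (starRingEnd ℂ z) • N)) = star u := by
      rw [hu, star_exp, skewAdjoint.mem_iff.mp (hskew z)]
    rw [hU', mul_assoc]
    calc ‖u * (T * star u)‖ = ‖T * star u‖ := CStarRing.norm_coe_unitary_mul ⟨u, hU⟩ _
      _ = ‖star (T * star u)‖ := (norm_star _).symm
      _ = ‖u * star T‖ := by rw [star_mul, star_star]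
      _ = ‖star T‖ := CStarRing.norm_coe_unitary_mul ⟨u, hU⟩ _
      _ = ‖T‖ := norm_star _
      _ ≤ ‖T‖ := le_rfl
  -- Liouville: f is constant, equal to T
  have hconst : ∀ z : ℂ, exp (z • star N) * T = T * exp (z • star N) := by
    intro z
    have h0 : f z = f 0 := hdiff.apply_eq_apply_of_bounded hbdd z 0
    have hf0 : f 0 = T := by simp [hf]
    have hz : exp (z • star N) * T * exp ((-z) • star N) = T := h0.trans hf0
    calc exp (z • star N) * T
        = exp (z • star N) * T * (exp ((-z) • star N) * exp (z • star N)) := by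
          rw [neg_smul, hinv, mul_one]
      _ = exp (z • star N) * T * exp ((-z) • star N) * exp (z • star N) :=
          (mul_assoc _ _ _).symm
      _ = T * exp (z • star N) := by rw [hz]
  -- differentiate at 0
  have h1 : HasDerivAt (fun z : ℂ => exp (z • star N) * T)
      (star N * exp ((0 : ℂ) • star N) * T) 0 :=
    (hasDerivAt_exp_smul_const' (star N) 0).mul_const T
  have h2 : HasDerivAt (fun z : ℂ => exp (z • star N) * T)
      (T * (star N * exp ((0 : ℂ) • star N))) 0 := by
    rw [funext hconst]
    exact (hasDerivAt_exp_smul_const' (star N) 0).const_mul T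
  have := h1.unique h2
  simpa [zero_smul, exp_zero] using this.symm

end Fuglede

noncomputable section

variable {H : Type*} [NormedAddCommGroup H] [InnerProductSpace ℂ H] [CompleteSpace H]

/-- The 2×2 block operator [[U₁₁, U₁₂],[U₂₁, U₂₂]] acting on the Hilbert space direct sum
H ⊕ H (realized as `WithLp 2 (H × H)`): (x,y) ↦ (U₁₁x + U₁₂y, U₂₁x + U₂₂y). -/
noncomputable def blockOp (U11 U12 U21 U22 : H →L[ℂ] H) :
    WithLp 2 (H × H) →L[ℂ] WithLp 2 (H × H) :=
  (((WithLp.prodContinuousLinearEquiv 2 ℂ H H).symm :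
      (H × H) →L[ℂ] WithLp 2 (H × H)).comp
    ((((U11.comp (fst ℂ H H)) + (U12.comp (snd ℂ H H))).prod
        ((U21.comp (fst ℂ H H)) + (U22.comp (snd ℂ H H)))))).comp
    ((WithLp.prodContinuousLinearEquiv 2 ℂ H H : WithLp 2 (H × H) →L[ℂ] H × H))

omit [CompleteSpace H] in
lemma blockOp_apply_fst (A B C D : H →L[ℂ] H) (x : WithLp 2 (H × H)) :
    (blockOp A B C D x).fst = A x.fst + B x.snd := rfl

omit [CompleteSpace H] in
lemma blockOp_apply_snd (A B C D : H →L[ℂ] H) (x : WithLp 2 (H × H)) :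
    (blockOp A B C D x).snd = C x.fst + D x.snd := rfl

omit [NormedAddCommGroup H] [InnerProductSpace ℂ H] [CompleteSpace H] in
lemma withlp_ext {x y : WithLp 2 (H × H)} (h1 : x.fst = y.fst) (h2 : x.snd = y.snd) : x = y :=
  by cases x; cases y; exact congrArg (WithLp.toLp 2) (Prod.ext h1 h2)

omit [CompleteSpace H] in
lemma blockOp_mul (A B C D A' B' C' D' : H →L[ℂ] H) :
    blockOp A B C D * blockOp A' B' C' D' =
      blockOp (A * A' + B * C') (A * B' + B * D') (C * A' + D * C') (C * B' + D * D') := by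
  ext x
  · exact withlp_ext (by simp [mul_apply, blockOp_apply_fst, blockOp_apply_snd, map_add]; abel)
      (by simp [mul_apply, blockOp_apply_fst, blockOp_apply_snd, map_add]; abel)

omit [CompleteSpace H] in
lemma blockOp_one : blockOp (1 : H →L[ℂ] H) 0 0 1 = 1 := by
  ext x
  · exact withlp_ext (by simp [blockOp_apply_fst, one_apply])
      (by simp [blockOp_apply_snd, one_apply])

omit [CompleteSpace H] in
lemma blockOp_inj {A B C D A' B' C' D' : H →L[ℂ] H}
    (h : blockOp A B C D = blockOp A' B' C' D') : A = A' ∧ B = B' ∧ C = C' ∧ D = D' := by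
  have hfst : ∀ x : H, ((WithLp.prodContinuousLinearEquiv 2 ℂ H H).symm (x, 0) :
      WithLp 2 (H × H)).fst = x := fun _ => rfl
  have hsnd : ∀ x : H, ((WithLp.prodContinuousLinearEquiv 2 ℂ H H).symm (x, 0) :
      WithLp 2 (H × H)).snd = 0 := fun _ => rfl
  have hfst' : ∀ x : H, ((WithLp.prodContinuousLinearEquiv 2 ℂ H H).symm (0, x) :
      WithLp 2 (H × H)).fst = 0 := fun _ => rfl
  have hsnd' : ∀ x : H, ((WithLp.prodContinuousLinearEquiv 2 ℂ H H).symm (0, x) :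
      WithLp 2 (H × H)).snd = x := fun _ => rfl
  refine ⟨?_, ?_, ?_, ?_⟩ <;> ext x
  · have := congrArg (fun f : WithLp 2 (H × H) →L[ℂ] WithLp 2 (H × H) =>
      (f ((WithLp.prodContinuousLinearEquiv 2 ℂ H H).symm (x, 0))).fst) h
    simpa [blockOp_apply_fst, hfst, hsnd] using this
  · have := congrArg (fun f : WithLp 2 (H × H) →L[ℂ] WithLp 2 (H × H) =>
      (f ((WithLp.prodContinuousLinearEquiv 2 ℂ H H).symm (0, x))).fst) h
    simpa [blockOp_apply_fst, hfst', hsnd'] using this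
  · have := congrArg (fun f : WithLp 2 (H × H) →L[ℂ] WithLp 2 (H × H) =>
      (f ((WithLp.prodContinuousLinearEquiv 2 ℂ H H).symm (x, 0))).snd) h
    simpa [blockOp_apply_snd, hfst, hsnd] using this
  · have := congrArg (fun f : WithLp 2 (H × H) →L[ℂ] WithLp 2 (H × H) =>
      (f ((WithLp.prodContinuousLinearEquiv 2 ℂ H H).symm (0, x))).snd) h
    simpa [blockOp_apply_snd, hfst', hsnd'] using this

lemma blockOp_adjoint (A B C D : H →L[ℂ] H) :
    adjoint (blockOp A B C D) = blockOp (adjoint A) (adjoint C) (adjoint B) (adjoint D) := by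
  symm
  rw [eq_adjoint_iff]
  intro x y
  simp only [WithLp.prod_inner_apply, WithLp.ofLp_fst, WithLp.ofLp_snd, blockOp_apply_fst, blockOp_apply_snd, inner_add_left,
    inner_add_right, adjoint_inner_left]
  ring

lemma blockOp_star (A B C D : H →L[ℂ] H) :
    star (blockOp A B C D) = blockOp (star A) (star C) (star B) (star D) := by
  simp only [star_eq_adjoint, blockOp_adjoint]

set_option maxHeartbeats 1000000 in
/-- For a commuting triple (N₁,N₂,N₃) of bounded operators on a complex Hilbert space H,
the following are equivalent:
(i) N₂ and N₃ are normal, N₃ is unitary, N₂ = N₂*N₃, ‖N₂‖ ≤ 2,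
    N₁*N₁ = I − ¼N₂*N₂ and N₁N₁* = I − ¼N₂N₂*;
(ii) there is a unitary 2×2 block operator U = [Uᵢⱼ] on H ⊕ H with commuting normal entries
     and U₁₁ = U₂₂, such that N₁ = U₂₁, N₂ = U₁₁ + U₂₂ and N₃ = U₁₁U₂₂ − U₁₂U₂₁. -/
theorem stmt13 (N₁ N₂ N₃ : H →L[ℂ] H)
    (h₁₂ : Commute N₁ N₂) (h₁₃ : Commute N₁ N₃) (h₂₃ : Commute N₂ N₃) :
    (IsStarNormal N₂ ∧ IsStarNormal N₃ ∧
      N₃ ∈ unitary (H →L[ℂ] H) ∧ N₂ = adjoint N₂ * N₃ ∧ ‖N₂‖ ≤ 2 ∧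
      adjoint N₁ * N₁ = 1 - (1 / 4 : ℂ) • (adjoint N₂ * N₂) ∧
      N₁ * adjoint N₁ = 1 - (1 / 4 : ℂ) • (N₂ * adjoint N₂)) ↔
    (∃ U11 U12 U21 U22 : H →L[ℂ] H,
      Commute U11 U12 ∧ Commute U11 U21 ∧ Commute U11 U22 ∧
      Commute U12 U21 ∧ Commute U12 U22 ∧ Commute U21 U22 ∧
      IsStarNormal U11 ∧ IsStarNormal U12 ∧ IsStarNormal U21 ∧ IsStarNormal U22 ∧
      U11 = U22 ∧
      blockOp U11 U12 U21 U22 ∈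
        unitary (WithLp 2 (H × H) →L[ℂ] WithLp 2 (H × H)) ∧
      N₁ = U21 ∧ N₂ = U11 + U22 ∧ N₃ = U11 * U22 - U12 * U21) := by
  simp only [← star_eq_adjoint]
  constructor
  · rintro ⟨hn2, hn3, hu3, h24, hnorm, e6, e7⟩
    set a : H →L[ℂ] H := (1/2 : ℂ) • N₂ with ha
    set b : H →L[ℂ] H := -(star N₁ * N₃) with hb
    -- basic facts
    have u3l : star N₃ * N₃ = 1 := (Unitary.mem_iff.mp hu3).1
    have u3r : N₃ * star N₃ = 1 := (Unitary.mem_iff.mp hu3).2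
    have n2 : star N₂ * N₂ = N₂ * star N₂ := hn2.star_comm_self.eq
    have n3 : star N₃ * N₃ = N₃ * star N₃ := hn3.star_comm_self.eq
    have k1 : star N₂ * N₃ = N₂ := h24.symm
    have k2 : star N₃ * N₂ = star N₂ := by
      have := congrArg star k1
      rwa [star_mul, star_star] at this
    have c23s : star N₃ * N₂ = N₂ * star N₃ := by
      calc star N₃ * N₂ = star N₃ * N₂ * (N₃ * star N₃) := by rw [u3r, mul_one]
        _ = star N₃ * (N₂ * N₃) * star N₃ := by simp only [mul_assoc]
        _ = star N₃ * (N₃ * N₂) * star N₃ := by rw [h₂₃.eq]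
        _ = (star N₃ * N₃) * (N₂ * star N₃) := by simp only [mul_assoc]
        _ = N₂ * star N₃ := by rw [u3l, one_mul]
    have k4 : N₂ * star N₃ = star N₂ := by rw [← c23s, k2]
    have k3 : N₃ * star N₂ = N₂ := by
      have := congrArg star k4
      rwa [star_mul, star_star, star_star] at this
    have n1 : star N₁ * N₁ = N₁ * star N₁ := by rw [e6, e7, n2]
    have fgl2 : N₁ * star N₂ = star N₂ * N₁ := fuglede_aux n2.symm h₁₂.eq
    have fgl2s : N₂ * star N₁ = star N₁ * N₂ := by
      have := congrArg star fgl2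
      rwa [star_mul, star_mul, star_star] at this
    have fgl3 : N₁ * star N₃ = star N₃ * N₁ := fuglede_aux n3.symm h₁₃.eq
    have fgl3s : N₃ * star N₁ = star N₁ * N₃ := by
      have := congrArg star fgl3
      rwa [star_mul, star_mul, star_star] at this
    have c12s : star N₂ * star N₁ = star N₁ * star N₂ := by
      have := congrArg star h₁₂.eq
      rwa [star_mul, star_mul] at this
    have c13s : star N₃ * star N₁ = star N₁ * star N₃ := by
      have := congrArg star h₁₃.eq
      rwa [star_mul, star_mul] at this
    have sa : star a = (1/2 : ℂ) • star N₂ := by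
      rw [ha, star_smul]
      norm_num
    have sb : star b = -(star N₃ * N₁) := by
      rw [hb, star_neg, star_mul, star_star]
    -- the commutation properties
    have hab : Commute a b := by
      have : Commute N₂ (star N₁ * N₃) :=
        Commute.mul_right (fgl2s : Commute N₂ (star N₁)) h₂₃
      exact (this.neg_right).smul_left _
    have hac : Commute a N₁ := (h₁₂.symm).smul_left _
    have hbc : Commute b N₁ := by
      have : Commute (star N₁ * N₃) N₁ :=
        Commute.mul_left (n1 : Commute (star N₁) N₁) h₁₃.symm
      exact this.neg_left
    -- normality
    have sna : IsStarNormal a := by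
      constructor
      rw [sa, ha]
      exact (hn2.star_comm_self.smul_left _).smul_right _
    have hbkey : (star N₃ * N₁) * (star N₁ * N₃) = N₁ * star N₁ := by
      calc (star N₃ * N₁) * (star N₁ * N₃) = (N₁ * star N₃) * (star N₁ * N₃) := by rw [← fgl3]
        _ = N₁ * (star N₃ * star N₁) * N₃ := by simp only [mul_assoc]
        _ = N₁ * (star N₁ * star N₃) * N₃ := by rw [c13s]
        _ = (N₁ * star N₁) * (star N₃ * N₃) := by simp only [mul_assoc]
        _ = N₁ * star N₁ := by rw [u3l, mul_one]
    have hbkey' : (star N₁ * N₃) * (star N₃ * N₁) = star N₁ * N₁ := by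
      calc (star N₁ * N₃) * (star N₃ * N₁) = star N₁ * (N₃ * star N₃) * N₁ := by
            simp only [mul_assoc]
        _ = star N₁ * N₁ := by rw [u3r, mul_one]
    have snb : IsStarNormal b := by
      constructor
      show star b * b = b * star b
      rw [sb, hb, neg_mul_neg, neg_mul_neg, hbkey, hbkey', n1]
    have snc : IsStarNormal N₁ := ⟨n1⟩
    refine ⟨a, b, N₁, a, hab, hac, Commute.refl a, hbc, hab.symm, hac.symm,
      sna, snb, snc, sna, rfl, ?_, rfl, by module, ?_⟩
    · -- unitarity
      rw [Unitary.mem_iff, blockOp_star, blockOp_mul, blockOp_mul, sa, sb, hb, ← blockOp_one]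
      constructor
      · congr 1
        · -- star a * a + star N₁ * N₁ = 1
          rw [smul_mul_smul_comm, e6]
          module
        · -- star a * b + star N₁ * a = 0
          have h : star N₂ * (star N₁ * N₃) = star N₁ * N₂ := by
            rw [← mul_assoc, c12s, mul_assoc, k1]
          rw [mul_neg, smul_mul_assoc, h, mul_smul_comm]
          module
        · -- star b * a + star a * N₁ = 0
          have h : (star N₃ * N₁) * N₂ = star N₂ * N₁ := by
            rw [← fgl3, mul_assoc, k2, fgl2]
          rw [neg_mul, mul_smul_comm, h, smul_mul_assoc]
          module
        · -- star b * b + star a * a = 1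
          rw [neg_mul_neg, hbkey, smul_mul_smul_comm, e7, n2]
          module
      · congr 1
        · -- a * star a + b * star b = 1
          rw [neg_mul_neg, hbkey', smul_mul_smul_comm, e6, n2]
          module
        · -- a * star N₁ + b * star a = 0
          have h : (star N₁ * N₃) * star N₂ = N₂ * star N₁ := by
            rw [mul_assoc, k3, fgl2s]
          rw [neg_mul, mul_smul_comm, h, smul_mul_assoc]
          module
        · -- N₁ * star a + a * star b = 0
          have h : N₂ * (star N₃ * N₁) = N₁ * star N₂ := by
            rw [← mul_assoc, ← c23s, k2, ← fgl2]
          rw [mul_neg, smul_mul_assoc, h, mul_smul_comm]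
          module
        · -- N₁ * star N₁ + a * star a = 1
          rw [smul_mul_smul_comm, e7]
          module
    · -- N₃ = a * a - b * N₁
      have hbc' : b * N₁ = (1/4 : ℂ) • (N₂ * N₂) - N₃ := by
        have h1 : star N₁ * N₃ * N₁ = star N₁ * N₁ * N₃ := by
          rw [mul_assoc, ← h₁₃.eq, mul_assoc]
        have h2 : star N₂ * N₂ * N₃ = N₂ * N₂ := by
          rw [mul_assoc, h₂₃.eq, ← mul_assoc, k1]
        rw [hb, neg_mul, h1, e6, sub_mul, one_mul, smul_mul_assoc, h2]
        module
      rw [hbc', ha, smul_mul_smul_comm]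
      module
  · rintro ⟨a, b, c, d, cab, cac, cad, cbc, cbd, ccd, sna, snb, snc, snd', had, hUni,
      rfl, rfl, rfl⟩
    subst had
    obtain ⟨hu1, hu2⟩ := Unitary.mem_iff.mp hUni
    rw [blockOp_star, blockOp_mul, ← blockOp_one] at hu1
    obtain ⟨E1, E2, E3, E4⟩ := blockOp_inj hu1
    rw [blockOp_star, blockOp_mul, ← blockOp_one] at hu2
    obtain ⟨F1, F2, F3, F4⟩ := blockOp_inj hu2
    -- the "adjugate" block operator is also unitary
    have hWs : star (blockOp a (-b) (-N₁) a) = blockOp (star a) (-(star N₁)) (-(star b)) (star a) := by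
      rw [blockOp_star, star_neg, star_neg]
    have hW : blockOp a (-b) (-N₁) a ∈ unitary (WithLp 2 (H × H) →L[ℂ] WithLp 2 (H × H)) := by
      rw [Unitary.mem_iff, hWs, blockOp_mul, blockOp_mul, ← blockOp_one]
      constructor
      · congr 1
        · simp only [neg_mul, mul_neg, neg_neg]; exact E1
        · simp only [neg_mul, mul_neg, ← neg_add]; rw [E2, neg_zero]
        · simp only [neg_mul, mul_neg, ← neg_add]; rw [E3, neg_zero]
        · simp only [neg_mul, mul_neg, neg_neg]; exact E4
      · congr 1
        · simp only [neg_mul, mul_neg, neg_neg]; exact F1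
        · simp only [neg_mul, mul_neg, ← neg_add]; rw [F2, neg_zero]
        · simp only [neg_mul, mul_neg, ← neg_add]; rw [F3, neg_zero]
        · simp only [neg_mul, mul_neg, neg_neg]; exact F4
    have hprod : blockOp a b N₁ a * blockOp a (-b) (-N₁) a
        = blockOp (a * a - b * N₁) 0 0 (a * a - b * N₁) := by
      rw [blockOp_mul]
      congr 1
      · rw [mul_neg, ← sub_eq_add_neg]
      · rw [mul_neg, cab.eq, neg_add_cancel]
      · rw [mul_neg, cac.eq, add_neg_cancel]
      · rw [mul_neg, ← cbc.eq, neg_add_eq_sub]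
    have hDu : blockOp (a * a - b * N₁) 0 0 (a * a - b * N₁)
        ∈ unitary (WithLp 2 (H × H) →L[ℂ] WithLp 2 (H × H)) := hprod ▸ mul_mem hUni hW
    obtain ⟨hd1, hd2⟩ := Unitary.mem_iff.mp hDu
    rw [blockOp_star, star_zero, blockOp_mul, ← blockOp_one] at hd1
    obtain ⟨hl, -, -, -⟩ := blockOp_inj hd1
    simp only [mul_zero, zero_mul, add_zero] at hl
    rw [blockOp_star, star_zero, blockOp_mul, ← blockOp_one] at hd2
    obtain ⟨hr, -, -, -⟩ := blockOp_inj hd2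
    simp only [mul_zero, zero_mul, add_zero] at hr
    -- derived identities
    have sc : Commute (star a) a := sna.star_comm_self
    have hE2' : star a * b = -(star N₁ * a) := eq_neg_of_add_eq_zero_left E2
    have hE1' : star N₁ * N₁ = 1 - star a * a := eq_sub_of_add_eq' E1
    have hF4' : N₁ * star N₁ = 1 - a * star a := eq_sub_of_add_eq F4
    have key : star a * (a * a - b * N₁) = a := by
      calc star a * (a * a - b * N₁) = star a * (a * a) - (star a * b) * N₁ := by
            rw [mul_sub, mul_assoc]
        _ = star a * (a * a) - (-(star N₁ * a)) * N₁ := by rw [hE2']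
        _ = star a * (a * a) + star N₁ * (a * N₁) := by noncomm_ring
        _ = star a * (a * a) + star N₁ * (N₁ * a) := by rw [cac.eq]
        _ = star a * (a * a) + (1 - star a * a) * a := by rw [← mul_assoc (star N₁) N₁ a, hE1']
        _ = a := by noncomm_ring
    refine ⟨?_, ?_, Unitary.mem_iff.mpr ⟨hl, hr⟩, ?_, ?_, ?_, ?_⟩
    · exact ⟨by rw [star_add]; exact (sc.add_right sc).add_left (sc.add_right sc)⟩
    · exact ⟨hl.trans hr.symm⟩
    · rw [star_add, add_mul, key]
    · -- the norm bound
      have hax : ∀ x : H, ‖star a x‖ ≤ ‖x‖ := by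
        intro x
        have hF := congrArg (fun T : H →L[ℂ] H => (inner ℂ (T x) x : ℂ)) F1
        simp only [add_apply, ContinuousLinearMap.mul_apply, ContinuousLinearMap.one_apply, inner_add_left] at hF
        have h1 : (inner ℂ (a ((star a) x)) x : ℂ) = inner ℂ ((star a) x) ((star a) x) := by
          rw [star_eq_adjoint]
          exact (adjoint_inner_right a (adjoint a x) x).symm
        have h2 : (inner ℂ (b ((star b) x)) x : ℂ) = inner ℂ ((star b) x) ((star b) x) := by
          rw [star_eq_adjoint]
          exact (adjoint_inner_right b (adjoint b x) x).symm
        rw [h1, h2, inner_self_eq_norm_sq_to_K, inner_self_eq_norm_sq_to_K,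
          inner_self_eq_norm_sq_to_K] at hF
        have hR : ‖(star a) x‖ ^ 2 + ‖(star b) x‖ ^ 2 = ‖x‖ ^ 2 := by exact_mod_cast hF
        have h3 : ‖(star a) x‖ ^ 2 ≤ ‖x‖ ^ 2 := by nlinarith [sq_nonneg (‖(star b) x‖)]
        exact (pow_le_pow_iff_left₀ (norm_nonneg _) (norm_nonneg _) two_ne_zero).mp h3
      have hna : ‖a‖ ≤ 1 := by
        have h' : ‖star a‖ ≤ 1 :=
          opNorm_le_bound _ zero_le_one (fun x => by simpa using hax x)
        calc ‖a‖ = ‖star (star a)‖ := by rw [star_star]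
          _ = ‖star a‖ := norm_star _
          _ ≤ 1 := h'
      calc ‖a + a‖ ≤ ‖a‖ + ‖a‖ := norm_add_le _ _
        _ ≤ 2 := by linarith
    · have expand : (star a + star a) * (a + a) = (4 : ℂ) • (star a * a) := by
        rw [add_mul, mul_add]
        module
      rw [hE1', star_add, expand]
      module
    · have expand : (a + a) * (star a + star a) = (4 : ℂ) • (a * star a) := by
        rw [add_mul, mul_add]
        module
      rw [hF4', star_add, expand]
      module
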